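/- arXiv:2303.03254 — 3 statements merged into one kernel-verified Lean document; each statement's English description precedes it below -/
import Mathlib

section
/- Let n, k, m be positive integers. For each t = 1,…,n and j = 1,…,m let ā_{tj} ∈ ℝ^k, let K_{tj} be a real symmetric positive semidefinite k×k matrix with diagonal square-root vector γ_{tj}, let z_j ≥ 0, and let b_j ∈ ℝ. Suppose x_1, …, x_n ∈ {0,1}^k are selection vectors (each satisfying ∑_{l=1}^k (x_t)_l ≤ 1) that satisfy the second-order cone constraints ∑_{t=1}^n ā_{tj}ᵀ x_t + z_j · √(∑_{t=1}^n x_tᵀ K_{tj} x_t) ≤ b_j for every j. Then x_1, …, x_n also satisfy the linearized constraints ∑_{t=1}^n (ā_{tj} + (z_j/√n) γ_{tj})ᵀ x_t ≤ b_j for every j. In other words, every feasible point of the integer second-order cone program is feasible for the linearized integer linear program. -/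
open Matrix Finset

/-- Every feasible point of the integer second-order cone program is feasible for the
linearized integer linear program: if the selection vectors `x_1, …, x_n` satisfy
`∑_t ā_{tj}ᵀ x_t + z_j √(∑_t x_tᵀ K_{tj} x_t) ≤ b_j` for all `j`, then they satisfy
`∑_t (ā_{tj} + (z_j/√n) γ_{tj})ᵀ x_t ≤ b_j` for all `j`, where `γ_{tj} l = √((K_{tj}) l l)`. -/
theorem soc_feasible_implies_linearized_feasible
    (n k m : ℕ) (hn : 0 < n) (hk : 0 < k) (hm : 0 < m)
    (abar : Fin n → Fin m → Fin k → ℝ)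
    (K : Fin n → Fin m → Matrix (Fin k) (Fin k) ℝ)
    (hK : ∀ t j, (K t j).PosSemidef)
    (z : Fin m → ℝ) (hz : ∀ j, 0 ≤ z j)
    (b : Fin m → ℝ)
    (x : Fin n → Fin k → ℝ)
    (hx01 : ∀ t l, x t l = 0 ∨ x t l = 1)
    (hxsum : ∀ t, ∑ l, x t l ≤ 1)
    (hSOC : ∀ j, ∑ t, abar t j ⬝ᵥ x t +
      z j * Real.sqrt (∑ t, x t ⬝ᵥ (K t j).mulVec (x t)) ≤ b j) :
    ∀ j, ∑ t, (fun l => abar t j l + (z j / Real.sqrt n) * Real.sqrt (K t j l l)) ⬝ᵥ x t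
      ≤ b j := by
  intro j
  set c : Fin n → ℝ := fun t => x t ⬝ᵥ (K t j).mulVec (x t) with hc
  have c_nonneg : ∀ t, 0 ≤ c t := by
    intro t
    have h := (hK t j).dotProduct_mulVec_nonneg (x t)
    simpa using h
  -- key: for each selection vector, γᵀx = √(xᵀKx)
  have key : ∀ t, (fun l => Real.sqrt (K t j l l)) ⬝ᵥ x t = Real.sqrt (c t) := by
    intro t
    by_cases h : ∀ l, x t l = 0
    · simp [hc, dotProduct, mulVec, h]
    · push_neg at h
      obtain ⟨l0, hl0⟩ := h
      have hx1 : x t l0 = 1 := (hx01 t l0).resolve_left hl0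
      have hzero : ∀ l, l ≠ l0 → x t l = 0 := by
        intro l hl
        by_contra h'
        have hx1' : x t l = 1 := (hx01 t l).resolve_left h'
        have hsub : ({l, l0} : Finset (Fin k)) ⊆ Finset.univ := Finset.subset_univ _
        have hpair : ∑ i ∈ ({l, l0} : Finset (Fin k)), x t i = 2 := by
          rw [Finset.sum_pair hl, hx1, hx1']; norm_num
        have hle : ∑ i ∈ ({l, l0} : Finset (Fin k)), x t i ≤ ∑ i, x t i := by
          apply Finset.sum_le_sum_of_subset_of_nonneg hsub
          intro i _ _
          rcases hx01 t i with h0 | h0 <;> simp [h0]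
        linarith [hxsum t]
      have hL : (fun l => Real.sqrt (K t j l l)) ⬝ᵥ x t = Real.sqrt (K t j l0 l0) := by
        simp only [dotProduct]
        rw [Finset.sum_eq_single l0]
        · rw [hx1, mul_one]
        · intro i _ hi; rw [hzero i hi, mul_zero]
        · intro habs; exact absurd (Finset.mem_univ l0) habs
      have hR : c t = K t j l0 l0 := by
        rw [hc]
        simp only [dotProduct, mulVec]
        rw [Finset.sum_eq_single l0]
        · rw [hx1, one_mul, Finset.sum_eq_single l0]
          · rw [hx1, mul_one]
          · intro i _ hi; rw [hzero i hi, mul_zero]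
          · intro habs; exact absurd (Finset.mem_univ l0) habs
        · intro i _ hi; rw [hzero i hi, zero_mul]
        · intro habs; exact absurd (Finset.mem_univ l0) habs
      rw [hL, hR]
  -- Cauchy-Schwarz: ∑ √(c t) ≤ √n * √(∑ c t)
  have sqrt_nonneg_sum : 0 ≤ ∑ t, Real.sqrt (c t) :=
    Finset.sum_nonneg fun t _ => Real.sqrt_nonneg _
  have hcs : (∑ t, Real.sqrt (c t)) ^ 2 ≤ (n : ℝ) * ∑ t, c t := by
    calc (∑ t, Real.sqrt (c t)) ^ 2 = (∑ t : Fin n, 1 * Real.sqrt (c t)) ^ 2 := by simp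
      _ ≤ (∑ t : Fin n, (1:ℝ) ^ 2) * ∑ t, Real.sqrt (c t) ^ 2 :=
          Finset.sum_mul_sq_le_sq_mul_sq Finset.univ _ _
      _ = (n : ℝ) * ∑ t, c t := by
          simp [Real.sq_sqrt (c_nonneg _)]
  have hbound : ∑ t, Real.sqrt (c t) ≤ Real.sqrt n * Real.sqrt (∑ t, c t) := by
    have h1 : ∑ t, Real.sqrt (c t) = Real.sqrt ((∑ t, Real.sqrt (c t)) ^ 2) :=
      (Real.sqrt_sq sqrt_nonneg_sum).symm
    rw [h1, ← Real.sqrt_mul (by positivity : (0:ℝ) ≤ (n:ℝ))]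
    exact Real.sqrt_le_sqrt hcs
  -- expand the linearized objective
  have expand : ∀ t, (fun l => abar t j l + (z j / Real.sqrt n) * Real.sqrt (K t j l l)) ⬝ᵥ x t
      = abar t j ⬝ᵥ x t + (z j / Real.sqrt n) * ((fun l => Real.sqrt (K t j l l)) ⬝ᵥ x t) := by
    intro t
    simp [dotProduct, add_mul, Finset.sum_add_distrib, Finset.mul_sum, mul_assoc]
  have hn' : (0:ℝ) < Real.sqrt n := Real.sqrt_pos.mpr (by exact_mod_cast hn)
  calc ∑ t, (fun l => abar t j l + (z j / Real.sqrt n) * Real.sqrt (K t j l l)) ⬝ᵥ x t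
      = ∑ t, abar t j ⬝ᵥ x t + (z j / Real.sqrt n) * ∑ t, Real.sqrt (c t) := by
        simp only [expand, key, Finset.sum_add_distrib, Finset.mul_sum]
    _ ≤ ∑ t, abar t j ⬝ᵥ x t + (z j / Real.sqrt n) * (Real.sqrt n * Real.sqrt (∑ t, c t)) := by
        gcongr
        exact div_nonneg (hz j) hn'.le
    _ = ∑ t, abar t j ⬝ᵥ x t + z j * Real.sqrt (∑ t, c t) := by
        field_simp
    _ ≤ b j := hSOC j
end

section
/- Let n, k, m be positive integers. For each t = 1,…,n and j = 1,…,m let c_t ∈ ℝ^k, ā_{tj} ∈ ℝ^k, let K_{tj} be a real symmetric positive semidefinite k×k matrix with diagonal square-root vector γ_{tj}, let z_j ≥ 0, and let b_j ∈ ℝ. Define F_SOC as the set of tuples (x_1,…,x_n) of selection vectors satisfying ∑_{t=1}^n ā_{tj}ᵀ x_t + z_j √(∑_{t=1}^n x_tᵀ K_{tj} x_t) ≤ b_j for all j, and F_LIN as the set of tuples of selection vectors satisfying ∑_{t=1}^n (ā_{tj} + (z_j/√n) γ_{tj})ᵀ x_t ≤ b_j for all j. Then the maximum of the objective ∑_{t=1}^n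 c_tᵀ x_t over F_LIN is at least its maximum over F_SOC (whenever F_SOC is nonempty); equivalently, the linearized integer linear program is a relaxation of the integer second-order cone program. -/
open Matrix Finset

/-- For a selection vector `v` and a PSD matrix `K`,
`∑ l, √(K l l) * v l = √(v ⬝ᵥ K *ᵥ v)`. -/
lemma sel_sqrt_eq {k : ℕ} (v : Fin k → ℝ)
    (h01 : ∀ l, v l = 0 ∨ v l = 1) (hs : ∑ l, v l ≤ 1)
    (K : Matrix (Fin k) (Fin k) ℝ) :
    ∑ l, Real.sqrt (K l l) * v l = Real.sqrt (v ⬝ᵥ K.mulVec v) := by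
  by_cases h : ∀ l, v l = 0
  · have hv : v = 0 := funext h
    subst hv
    simp [dotProduct]
  · push_neg at h
    obtain ⟨l₀, hl₀⟩ := h
    have hv1 : v l₀ = 1 := (h01 l₀).resolve_left hl₀
    have hz : ∀ l, l ≠ l₀ → v l = 0 := by
      intro l hl
      rcases h01 l with h0 | h1
      · exact h0
      · exfalso
        have hpair : ({l, l₀} : Finset (Fin k)) ⊆ Finset.univ := Finset.subset_univ _
        have hnn : ∀ i ∈ Finset.univ, i ∉ ({l, l₀} : Finset (Fin k)) → 0 ≤ v i := by
          intro i _ _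
          rcases h01 i with h' | h' <;> simp [h']
        have := Finset.sum_le_sum_of_subset_of_nonneg hpair hnn
        rw [Finset.sum_pair hl, h1, hv1] at this
        linarith
    have hv : v = fun i => if i = l₀ then 1 else 0 := by
      funext i
      by_cases hi : i = l₀
      · simp [hi, hv1]
      · simp [hi, hz i hi]
    subst hv
    simp [dotProduct, Matrix.mulVec, mul_ite, ite_mul, Finset.sum_ite_eq']

/-- Cauchy–Schwarz: for nonneg `a`, `∑ √(a t) ≤ √n * √(∑ a t)`. -/
lemma sum_sqrt_le {n : ℕ} (a : Fin n → ℝ) (ha : ∀ t, 0 ≤ a t) :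
    ∑ t, Real.sqrt (a t) ≤ Real.sqrt n * Real.sqrt (∑ t, a t) := by
  have hcs : (∑ t, Real.sqrt (a t)) ^ 2 ≤ (n : ℝ) * ∑ t, a t := by
    have := sq_sum_le_card_mul_sum_sq (s := (Finset.univ : Finset (Fin n)))
      (f := fun t => Real.sqrt (a t))
    simpa [Real.sq_sqrt (ha _)] using this
  have h1 : ∑ t, Real.sqrt (a t) = Real.sqrt ((∑ t, Real.sqrt (a t)) ^ 2) :=
    (Real.sqrt_sq (Finset.sum_nonneg fun t _ => Real.sqrt_nonneg _)).symm
  rw [h1, ← Real.sqrt_mul (Nat.cast_nonneg n)]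
  exact Real.sqrt_le_sqrt hcs

/-- The linearized integer linear program is a relaxation of the integer second-order cone
program: whenever the SOC feasible set `F_SOC` is nonempty, the maximum of the objective
`∑_t c_tᵀ x_t` over the linearized feasible set `F_LIN` is at least its maximum over
`F_SOC`. Both feasible sets consist of tuples of selection vectors (0-1 vectors with
at most one nonzero entry), so they are finite and the suprema are attained. -/
theorem linearized_relaxation_of_soc
    (n k m : ℕ) (hn : 0 < n) (hk : 0 < k) (hm : 0 < m)
    (c : Fin n → Fin k → ℝ)
    (abar : Fin n → Fin m → Fin k → ℝ)
    (K : Fin n → Fin m → Matrix (Fin k) (Fin k) ℝ)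
    (hK : ∀ t j, (K t j).PosSemidef)
    (z : Fin m → ℝ) (hz : ∀ j, 0 ≤ z j)
    (b : Fin m → ℝ)
    (FSOC FLIN : Set (Fin n → Fin k → ℝ))
    (hFSOC : FSOC = {x | (∀ t l, x t l = 0 ∨ x t l = 1) ∧ (∀ t, ∑ l, x t l ≤ 1) ∧
      ∀ j, ∑ t, abar t j ⬝ᵥ x t +
        z j * Real.sqrt (∑ t, x t ⬝ᵥ (K t j).mulVec (x t)) ≤ b j})
    (hFLIN : FLIN = {x | (∀ t l, x t l = 0 ∨ x t l = 1) ∧ (∀ t, ∑ l, x t l ≤ 1) ∧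
      ∀ j, ∑ t, (fun l => abar t j l + (z j / Real.sqrt n) * Real.sqrt (K t j l l)) ⬝ᵥ x t
        ≤ b j})
    (hne : FSOC.Nonempty) :
    sSup ((fun x => ∑ t, c t ⬝ᵥ x t) '' FSOC) ≤
      sSup ((fun x => ∑ t, c t ⬝ᵥ x t) '' FLIN) := by
  -- FSOC ⊆ FLIN
  have hsub : FSOC ⊆ FLIN := by
    intro x hx
    rw [hFSOC] at hx
    rw [hFLIN]
    obtain ⟨h01, hs, hj⟩ := hx
    refine ⟨h01, hs, fun j => ?_⟩
    have hquad : ∀ t, 0 ≤ x t ⬝ᵥ (K t j).mulVec (x t) := by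
      intro t
      have := (hK t j).dotProduct_mulVec_nonneg (x t)
      simpa using this
    have hexp : ∀ t, (fun l => abar t j l +
        (z j / Real.sqrt n) * Real.sqrt (K t j l l)) ⬝ᵥ x t
        = abar t j ⬝ᵥ x t +
          (z j / Real.sqrt n) * Real.sqrt (x t ⬝ᵥ (K t j).mulVec (x t)) := by
      intro t
      have hsel := sel_sqrt_eq (x t) (h01 t) (hs t) (K t j)
      simp only [dotProduct, add_mul, Finset.sum_add_distrib, mul_assoc,
        ← Finset.mul_sum]
      rw [show ∑ i, Real.sqrt (K t j i i) * x t i = ∑ l, Real.sqrt (K t j l l) * x t l from rfl, hsel]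
      rfl
    calc ∑ t, (fun l => abar t j l +
          (z j / Real.sqrt n) * Real.sqrt (K t j l l)) ⬝ᵥ x t
        = ∑ t, abar t j ⬝ᵥ x t +
          (z j / Real.sqrt n) * ∑ t, Real.sqrt (x t ⬝ᵥ (K t j).mulVec (x t)) := by
          simp only [hexp, Finset.sum_add_distrib, Finset.mul_sum]
      _ ≤ ∑ t, abar t j ⬝ᵥ x t +
          z j * Real.sqrt (∑ t, x t ⬝ᵥ (K t j).mulVec (x t)) := by
          have hn' : (0:ℝ) < Real.sqrt n := Real.sqrt_pos.mpr (by exact_mod_cast hn)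
          have hcs := sum_sqrt_le (fun t => x t ⬝ᵥ (K t j).mulVec (x t)) hquad
          have h2 : z j / Real.sqrt n * ∑ t, Real.sqrt (x t ⬝ᵥ (K t j).mulVec (x t)) ≤
              z j / Real.sqrt n * (Real.sqrt n * Real.sqrt (∑ t, x t ⬝ᵥ (K t j).mulVec (x t))) :=
            mul_le_mul_of_nonneg_left hcs (div_nonneg (hz j) hn'.le)
          have h3 : z j / Real.sqrt n * (Real.sqrt n * Real.sqrt (∑ t, x t ⬝ᵥ (K t j).mulVec (x t)))
              = z j * Real.sqrt (∑ t, x t ⬝ᵥ (K t j).mulVec (x t)) := by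
            field_simp
          linarith
      _ ≤ b j := hj j
  -- bounded above
  have hbdd : BddAbove ((fun x => ∑ t, c t ⬝ᵥ x t) '' FLIN) := by
    refine ⟨∑ t, ∑ l, |c t l|, ?_⟩
    rintro y ⟨x, hx, rfl⟩
    rw [hFLIN] at hx
    obtain ⟨h01, -, -⟩ := hx
    refine Finset.sum_le_sum fun t _ => Finset.sum_le_sum fun l _ => ?_
    rcases h01 t l with h | h <;> simp [h, le_abs_self, abs_nonneg]
  exact csSup_le_csSup hbdd (hne.image _) (Set.image_mono hsub)
end

section
/- (Theorem 1, constraint-violation bound.) Fix positive integers k, m, reals 0 < c̄, 0 < ā_max, 0 < κ, confidence levels η_1,…,η_m ∈ [1/2, 1), and reals 0 < d̲ ≤ d̄. There exists a constant C > 0, depending only on k, m, c̄, ā_max, κ, the η_j, d̲ and d̄, with the following property. Let n be any positive integer, let b ∈ ℝ^m with d̲ ≤ b_j/n ≤ d̄ for all j, and let (c_t, (ā_{tj})_{j=1}^m, (K_{tj})_{j=1}^m), t = 1,…,n, be i.i.d. random tuples where c_t ∈ [0, c̄]^k, each ā_{tj} ∈ [0, ā_max]^k, and each K_{tj} is a symmetric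 positive semidefinite k×k matrix with all entries bounded by κ. Let x_1, …, x_n ∈ {0,1}^k be the output of the online primal-dual algorithm: with ã_{tj} = ā_{tj} + (Φ^{-1}(η_j)/√n) γ_{tj} (γ_{tj} the vector of square roots of the diagonal entries of K_{tj}), Ã_t the m×k matrix with rows ã_{tj}ᵀ, and d = b/n, set p_1 = 0; at step t let v_t = max_{l=1,…,k} (c_tᵀ − p_tᵀ Ã_t) e_l, set x_t = e_{l_t} for the least maximizing index l_t if v_t > 0 and x_t = 0 otherwise, and update p_{t+1} = max{p_t + (1/√n)(Ã_t x_t − d), 0} componentwise. Define the second-order cone constraint functions g_j(x) = ∑_{t=1}^n ā_{tj}ᵀ x_t + Φ^{-1}(η_j) √(∑_{t=1}^n x_tᵀ K_{tj} x_t) for j = 1,…,m, and let g(x) − b ∈ ℝ^m have components g_j(x) − b_j. Then E[ ‖(g(x) − b)^+‖₂ ] ≤ C √n, where (·)^+ denotes the componentwise positive part and ‖·‖₂ the Euclidean norm on ℝ^m. -/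
open MeasureTheory ProbabilityTheory Matrix Finset

/-- The data revealed at one step of the online problem: the revenue vector `c_t ∈ ℝ^k`,
the mean consumption vectors `ā_{tj} ∈ ℝ^k` (`j = 1,…,m`), and the covariance matrices
`K_{tj}` (`j = 1,…,m`), the latter encoded as functions `Fin k → Fin k → ℝ`. -/
abbrev RAPData (k m : ℕ) : Type :=
  (Fin k → ℝ) × (Fin m → (Fin k → ℝ)) × (Fin m → (Fin k → Fin k → ℝ))

open Classical in
/-- The primal decision of the online primal-dual algorithm given the score vector
`l ↦ (cᵀ − pᵀÃ)e_l`: if the maximal score `v` is positive, output the standard basis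
vector `e_l` for the least index `l` attaining the maximum; otherwise output `0`. -/
noncomputable def opdChoice {k : ℕ} (score : Fin k → ℝ) : Fin k → ℝ :=
  if h : ∃ l, (∀ l', score l' ≤ score l) ∧ 0 < score l then
    fun i => if i = (Finset.univ.filter fun l => ∀ l', score l' ≤ score l).min'
        ⟨h.choose, by simpa using h.choose_spec.1⟩ then 1 else 0
  else 0

/-- The dual price iterates of the online primal-dual algorithm: `p 0 = 0` and
`p (t+1) = max { p t + (1/√n)(Ã_t x_t − d), 0 }` componentwise, where
`x_t = opdChoice (l ↦ (c_tᵀ − p_tᵀ Ã_t) e_l)`. -/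
noncomputable def opdP {k m : ℕ} (n : ℕ) (c : ℕ → Fin k → ℝ)
    (Atil : ℕ → Matrix (Fin m) (Fin k) ℝ) (d : Fin m → ℝ) : ℕ → Fin m → ℝ
  | 0 => 0
  | t + 1 => fun j =>
      max (opdP n c Atil d t j +
        (1 / Real.sqrt n) *
          ((Atil t).mulVec
            (opdChoice fun l => c t l - ∑ j', opdP n c Atil d t j' * Atil t j' l) j
            - d j)) 0

/-- The primal decisions of the online primal-dual algorithm. -/
noncomputable def opdXseq {k m : ℕ} (n : ℕ) (c : ℕ → Fin k → ℝ)
    (Atil : ℕ → Matrix (Fin m) (Fin k) ℝ) (d : Fin m → ℝ) (t : ℕ) : Fin k → ℝ :=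
  opdChoice fun l => c t l - ∑ j, opdP n c Atil d t j * Atil t j l

/-- The output `x_1, …, x_n` of the online primal-dual algorithm (Algorithm 1) run on the
data sequence `data`, with `ã_{tj} = ā_{tj} + (z_j/√n) γ_{tj}` (where
`γ_{tj} l = √((K_{tj}) l l)`), `Ã_t` the matrix with rows `ã_{tj}ᵀ`, and `d = b/n`. -/
noncomputable def opdOutput {k m : ℕ} (n : ℕ) (z b : Fin m → ℝ)
    (data : Fin n → RAPData k m) (t : Fin n) : Fin k → ℝ :=
  opdXseq n
    (fun s => if h : s < n then (data ⟨s, h⟩).1 else 0)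
    (fun s => if h : s < n then
        Matrix.of (fun j l => (data ⟨s, h⟩).2.1 j l +
          (z j / Real.sqrt n) * Real.sqrt ((data ⟨s, h⟩).2.2 j l l))
      else 0)
    (fun j => b j / n) t



set_option linter.unusedVariables false
set_option maxHeartbeats 2000000


lemma opdChoice_spec {k : ℕ} (score : Fin k → ℝ) :
    opdChoice score = 0 ∨
      ∃ l, opdChoice score = (fun i => if i = l then (1:ℝ) else 0) ∧ 0 < score l := by
  classical
  unfold opdChoice
  split_ifs with h
  · right
    refine ⟨_, rfl, ?_⟩
    have hl := Finset.min'_mem (Finset.univ.filter fun l => ∀ l', score l' ≤ score l)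
      ⟨h.choose, by simpa using h.choose_spec.1⟩
    rw [Finset.mem_filter] at hl
    exact lt_of_lt_of_le h.choose_spec.2 (hl.2 _)
  · left; rfl

lemma opdP_zero {k m : ℕ} (n : ℕ) (c : ℕ → Fin k → ℝ) (Atil : ℕ → Matrix (Fin m) (Fin k) ℝ)
    (d : Fin m → ℝ) (j : Fin m) : opdP n c Atil d 0 j = 0 := rfl

lemma opdP_succ {k m : ℕ} (n : ℕ) (c : ℕ → Fin k → ℝ) (Atil : ℕ → Matrix (Fin m) (Fin k) ℝ)
    (d : Fin m → ℝ) (t : ℕ) (j : Fin m) :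
    opdP n c Atil d (t + 1) j =
      max (opdP n c Atil d t j +
        (1 / Real.sqrt n) * ((Atil t).mulVec (opdXseq n c Atil d t) j - d j)) 0 := rfl

lemma opdP_nonneg {k m : ℕ} (n : ℕ) (c : ℕ → Fin k → ℝ) (Atil : ℕ → Matrix (Fin m) (Fin k) ℝ)
    (d : Fin m → ℝ) : ∀ t j, 0 ≤ opdP n c Atil d t j
  | 0, _ => le_refl 0
  | (t+1), j => (opdP_succ n c Atil d t j) ▸ le_max_right _ 0

lemma opdXseq_def {k m : ℕ} (n : ℕ) (c : ℕ → Fin k → ℝ) (Atil : ℕ → Matrix (Fin m) (Fin k) ℝ)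
    (d : Fin m → ℝ) (t : ℕ) :
    opdXseq n c Atil d t =
      opdChoice fun l => c t l - ∑ j', opdP n c Atil d t j' * Atil t j' l := rfl

set_option maxHeartbeats 1000000 in
lemma opd_sum_sq_le {k m : ℕ} (n : ℕ) (hn : 1 ≤ n)
    (c : ℕ → Fin k → ℝ) (Atil : ℕ → Matrix (Fin m) (Fin k) ℝ) (d : Fin m → ℝ)
    (cbar A dlow dhigh : ℝ) (hcbar : 0 < cbar) (hA : 0 ≤ A) (hdlow : 0 < dlow)
    (hdhigh : 0 ≤ dhigh)
    (hc : ∀ t l, c t l ≤ cbar)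
    (hAb : ∀ t j l, |Atil t j l| ≤ A)
    (hdl : ∀ j, dlow ≤ d j) (hdh : ∀ j, d j ≤ dhigh) :
    ∀ t, ∑ j, (opdP n c Atil d t j) ^ 2
      ≤ ((2 * cbar + m * (A + dhigh) ^ 2) / (2 * dlow)) ^ 2
          + 2 * cbar + m * (A + dhigh) ^ 2 := by
  have hsn1 : (1 : ℝ) ≤ Real.sqrt n := by
    rw [Real.one_le_sqrt]; exact_mod_cast hn
  have hsn0 : (0 : ℝ) < Real.sqrt n := lt_of_lt_of_le one_pos hsn1
  have hnn : Real.sqrt n ≤ (n : ℝ) := by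
    rw [Real.sqrt_le_left (by exact_mod_cast Nat.zero_le n)]
    have h1 : (1 : ℝ) ≤ (n : ℝ) := by exact_mod_cast hn
    nlinarith
  set M : ℝ := m * (A + dhigh) ^ 2 with hMdef
  have hM0 : 0 ≤ M := by positivity
  set R : ℝ := (2 * cbar + M) / (2 * dlow) with hRdef
  have hR0 : 0 ≤ R := by positivity
  intro t
  induction t with
  | zero =>
    simp only [opdP_zero]
    have : ∑ _j : Fin m, (0 : ℝ) ^ 2 = 0 := by simp
    rw [this]; nlinarith [sq_nonneg R, hM0, hcbar.le]
  | succ t ih =>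
    set p : Fin m → ℝ := opdP n c Atil d t with hpdef
    have hp0 : ∀ j, 0 ≤ p j := fun j => opdP_nonneg n c Atil d t j
    set X : Fin k → ℝ := opdXseq n c Atil d t with hXdef
    set Δ : Fin m → ℝ := fun j => (1 / Real.sqrt n) * ((Atil t).mulVec X j - d j) with hΔdef
    -- structure of X
    have hXc : X = opdChoice fun l => c t l - ∑ j', p j' * Atil t j' l := rfl
    have hmv : ∀ j, |(Atil t).mulVec X j| ≤ A := by
      intro j
      rcases opdChoice_spec (fun l => c t l - ∑ j', p j' * Atil t j' l) with h0 | ⟨l, hl, _⟩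
      · rw [hXc, h0]
        simpa [Matrix.mulVec_zero] using hA
      · rw [hXc, hl]
        have : (Atil t).mulVec (fun i => if i = l then (1:ℝ) else 0) j = Atil t j l := by
          simp [Matrix.mulVec, dotProduct, mul_ite]
        rw [this]; exact hAb t j l
    have hscore : ∑ j, p j * (Atil t).mulVec X j ≤ cbar := by
      rcases opdChoice_spec (fun l => c t l - ∑ j', p j' * Atil t j' l) with h0 | ⟨l, hl, hpos⟩
      · rw [hXc, h0]
        simp [Matrix.mulVec_zero]
        exact hcbar.le
      · rw [hXc, hl]
        have hmve : ∀ j, (Atil t).mulVec (fun i => if i = l then (1:ℝ) else 0) j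
            = Atil t j l := by
          intro j; simp [Matrix.mulVec, dotProduct, mul_ite]
        simp only [hmve]
        have := hpos
        simp only [sub_pos] at this
        exact le_trans this.le (hc t l)
    -- step formula
    have hstep : ∀ j, opdP n c Atil d (t + 1) j = max (p j + Δ j) 0 := fun j =>
      opdP_succ n c Atil d t j
    have hsq : ∀ j, (opdP n c Atil d (t + 1) j) ^ 2 ≤ (p j + Δ j) ^ 2 := by
      intro j
      rw [hstep j]
      rcases le_or_gt 0 (p j + Δ j) with h | h
      · rw [max_eq_left h]
      · rw [max_eq_right h.le]; simpa using sq_nonneg (p j + Δ j)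
    clear_value p X Δ
    have hsum : ∑ j, (opdP n c Atil d (t + 1) j) ^ 2 ≤ ∑ j, (p j + Δ j) ^ 2 :=
      Finset.sum_le_sum fun j _ => hsq j
    have hexp : ∑ j, (p j + Δ j) ^ 2
        = ∑ j, p j ^ 2 + 2 * ∑ j, p j * Δ j + ∑ j, Δ j ^ 2 := by
      rw [Finset.mul_sum, ← Finset.sum_add_distrib, ← Finset.sum_add_distrib]
      exact Finset.sum_congr rfl fun j _ => by ring
    -- bound on Δ²
    have hΔb : ∀ j, Δ j ^ 2 ≤ (A + dhigh) ^ 2 / n := by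
      intro j
      have h1 : |(Atil t).mulVec X j - d j| ≤ A + dhigh := by
        have h2 := hmv j
        have h3 := hdl j
        have h4 := hdh j
        rw [abs_le] at h2 ⊢
        constructor <;> nlinarith [h2.1, h2.2]
      have h5 : Δ j ^ 2 = ((Atil t).mulVec X j - d j) ^ 2 / n := by
        rw [hΔdef]
        have : Real.sqrt n ^ 2 = (n : ℝ) := Real.sq_sqrt (by positivity)
        field_simp
        rw [this]; ring
      rw [h5]
      apply div_le_div_of_nonneg_right _ (Nat.cast_nonneg n)
      · nlinarith [abs_nonneg ((Atil t).mulVec X j - d j), sq_abs ((Atil t).mulVec X j - d j)]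
    have hΔsum : ∑ j, Δ j ^ 2 ≤ M / Real.sqrt n := by
      calc ∑ j, Δ j ^ 2 ≤ ∑ _j : Fin m, (A + dhigh) ^ 2 / n :=
            Finset.sum_le_sum fun j _ => hΔb j
        _ = M / n := by rw [Finset.sum_const]; simp [hMdef]; ring
        _ ≤ M / Real.sqrt n := div_le_div_of_nonneg_left hM0 hsn0 hnn
    -- bound on p·Δ
    have hpd : ∑ j, p j * Δ j ≤ (1 / Real.sqrt n) * (cbar - dlow * ∑ j, p j) := by
      have h1 : ∑ j, p j * Δ j
          = (1 / Real.sqrt n) * (∑ j, p j * (Atil t).mulVec X j - ∑ j, p j * d j) := by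
        rw [← Finset.sum_sub_distrib, Finset.mul_sum]
        exact Finset.sum_congr rfl fun j _ => by rw [hΔdef]; ring
      have h2 : dlow * ∑ j, p j ≤ ∑ j, p j * d j := by
        rw [Finset.mul_sum]
        exact Finset.sum_le_sum fun j _ => by
          rw [mul_comm]
          exact mul_le_mul_of_nonneg_left (hdl j) (hp0 j)
      rw [h1]
      apply mul_le_mul_of_nonneg_left _ (by positivity)
      linarith [hscore]
    have hS0 : 0 ≤ ∑ j, p j := Finset.sum_nonneg fun j _ => hp0 j
    rcases le_or_gt (∑ j, p j) R with hSR | hSR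
    · -- small prices: sum of squares at most R²
      have hNS : ∑ j, p j ^ 2 ≤ (∑ j, p j) ^ 2 :=
        Finset.sum_sq_le_sq_sum_of_nonneg fun j _ => hp0 j
      have hpd' : ∑ j, p j * Δ j ≤ cbar := by
        rcases le_or_gt (cbar - dlow * ∑ j, p j) 0 with h' | h'
        · have := mul_nonpos_of_nonneg_of_nonpos (le_of_lt (by positivity :
            (0:ℝ) < 1 / Real.sqrt n)) h'
          linarith [hpd]
        · have hle : (1 / Real.sqrt n) * (cbar - dlow * ∑ j, p j)
              ≤ cbar - dlow * ∑ j, p j := by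
            apply mul_le_of_le_one_left h'.le
            rw [div_le_one hsn0]; exact hsn1
          nlinarith [hpd, hp0, mul_nonneg hdlow.le hS0]
      have hMs : M / Real.sqrt n ≤ M := by
        apply div_le_self hM0 hsn1
      calc ∑ j, (opdP n c Atil d (t + 1) j) ^ 2 ≤ ∑ j, (p j + Δ j) ^ 2 := hsum
        _ = ∑ j, p j ^ 2 + 2 * ∑ j, p j * Δ j + ∑ j, Δ j ^ 2 := hexp
        _ ≤ (∑ j, p j) ^ 2 + 2 * cbar + M := by nlinarith [hΔsum, hpd', hMs, hNS]
        _ ≤ R ^ 2 + 2 * cbar + M := by nlinarith [hSR, hS0]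
    · -- large prices: the squared norm does not increase
      have hkey : 2 * ∑ j, p j * Δ j + ∑ j, Δ j ^ 2 ≤ 0 := by
        have hRd : dlow * R = (2 * cbar + M) / 2 := by
          rw [hRdef]; field_simp
        have h3 : cbar - dlow * ∑ j, p j ≤ - (M / 2) := by
          have : dlow * R ≤ dlow * ∑ j, p j := mul_le_mul_of_nonneg_left hSR.le hdlow.le
          rw [hRd] at this; linarith
        have h4 : ∑ j, p j * Δ j ≤ (1 / Real.sqrt n) * (- (M / 2)) := by
          refine le_trans hpd ?_
          apply mul_le_mul_of_nonneg_left h3 (by positivity)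
        have hu : M / Real.sqrt n = M * (1 / Real.sqrt n) := by ring
        rw [hu] at hΔsum
        nlinarith [h4, hΔsum]
      calc ∑ j, (opdP n c Atil d (t + 1) j) ^ 2 ≤ ∑ j, (p j + Δ j) ^ 2 := hsum
        _ = ∑ j, p j ^ 2 + (2 * ∑ j, p j * Δ j + ∑ j, Δ j ^ 2) := by rw [hexp]; ring
        _ ≤ ∑ j, p j ^ 2 := by linarith
        _ ≤ _ := ih

lemma opd_telescope {k m : ℕ} (n : ℕ) (c : ℕ → Fin k → ℝ)
    (Atil : ℕ → Matrix (Fin m) (Fin k) ℝ) (d : Fin m → ℝ) (hsn0 : 0 < Real.sqrt n) :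
    ∀ T j, ∑ t ∈ Finset.range T, ((Atil t).mulVec (opdXseq n c Atil d t) j - d j)
      ≤ Real.sqrt n * opdP n c Atil d T j := by
  intro T
  induction T with
  | zero => intro j; simp [opdP_zero]
  | succ T ih =>
    intro j
    rw [Finset.sum_range_succ]
    have h1 : opdP n c Atil d T j
          + (1 / Real.sqrt n) * ((Atil T).mulVec (opdXseq n c Atil d T) j - d j)
        ≤ opdP n c Atil d (T + 1) j := by
      rw [opdP_succ]; exact le_max_left _ _
    have h2 := mul_le_mul_of_nonneg_left h1 hsn0.le
    have h3 : Real.sqrt n * (opdP n c Atil d T j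
          + (1 / Real.sqrt n) * ((Atil T).mulVec (opdXseq n c Atil d T) j - d j))
        = Real.sqrt n * opdP n c Atil d T j
          + ((Atil T).mulVec (opdXseq n c Atil d T) j - d j) := by
      field_simp
    rw [h3] at h2
    linarith [ih j]

lemma sqrt_mul_le_half_add {x y : ℝ} (hx : 0 ≤ x) (hy : 0 ≤ y) :
    Real.sqrt (x * y) ≤ (x + y) / 2 := by
  rw [show (x + y) / 2 = Real.sqrt (((x + y) / 2) ^ 2) from
    (Real.sqrt_sq (by positivity)).symm]
  apply Real.sqrt_le_sqrt
  nlinarith [sq_nonneg (x - y)]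

lemma posSemidef_diag_nonneg {k : ℕ} {K : Fin k → Fin k → ℝ}
    (h : (Matrix.of K).PosSemidef) (l : Fin k) : 0 ≤ K l l := by
  simpa using h.diag_nonneg (i := l)

set_option maxHeartbeats 2000000 in
lemma opd_pointwise_bound {k m : ℕ} (n : ℕ) (hn : 0 < n)
    (cbar amax κ dlow dhigh Zmax : ℝ)
    (hcbar : 0 < cbar) (hamax : 0 < amax) (hκ : 0 < κ) (hdlow : 0 < dlow)
    (hdhigh : 0 ≤ dhigh) (hZmax : 1 ≤ Zmax)
    (z b : Fin m → ℝ) (hzZ : ∀ j, |z j| ≤ Zmax)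
    (hb : ∀ j, dlow ≤ b j / n ∧ b j / n ≤ dhigh)
    (data : Fin n → RAPData k m)
    (hcD : ∀ t l, (data t).1 l ∈ Set.Icc 0 cbar)
    (haD : ∀ t j l, (data t).2.1 j l ∈ Set.Icc 0 amax)
    (hKpsd : ∀ t j, (Matrix.of ((data t).2.2 j)).PosSemidef)
    (hKb : ∀ t j l l', |(data t).2.2 j l l'| ≤ κ) :
    Real.sqrt (∑ j,
        (max (∑ t, (data t).2.1 j ⬝ᵥ opdOutput n z b data t
          + z j * Real.sqrt (∑ t, opdOutput n z b data t ⬝ᵥ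
              (Matrix.of ((data t).2.2 j)).mulVec (opdOutput n z b data t))
          - b j) 0) ^ 2)
      ≤ (Real.sqrt m *
          (Real.sqrt (((2 * cbar + m * ((amax + Zmax * Real.sqrt κ) + dhigh) ^ 2)
              / (2 * dlow)) ^ 2
            + 2 * cbar + m * ((amax + Zmax * Real.sqrt κ) + dhigh) ^ 2)
          + Zmax * Real.sqrt κ / 2)) * Real.sqrt n := by
  have hsn1 : (1 : ℝ) ≤ Real.sqrt n := by rw [Real.one_le_sqrt]; exact_mod_cast hn
  have hsn0 : (0 : ℝ) < Real.sqrt n := lt_of_lt_of_le one_pos hsn1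
  have hnR : (0 : ℝ) < n := by exact_mod_cast hn
  set A : ℝ := amax + Zmax * Real.sqrt κ with hAdef
  have hA0 : 0 ≤ A := by positivity
  set c' : ℕ → Fin k → ℝ := fun s => if h : s < n then (data ⟨s, h⟩).1 else 0 with hc'
  set Atil' : ℕ → Matrix (Fin m) (Fin k) ℝ := fun s => if h : s < n then
      Matrix.of (fun j l => (data ⟨s, h⟩).2.1 j l +
        (z j / Real.sqrt n) * Real.sqrt ((data ⟨s, h⟩).2.2 j l l)) else 0 with hAtil'
  set d : Fin m → ℝ := fun j => b j / n with hddef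
  have hout : ∀ t : Fin n, opdOutput n z b data t = opdXseq n c' Atil' d ↑t := fun t => rfl
  have hcb' : ∀ t l, c' t l ≤ cbar := by
    intro t l
    by_cases h : t < n
    · simp only [hc', dif_pos h]; exact (hcD ⟨t, h⟩ l).2
    · simp only [hc', dif_neg h, Pi.zero_apply]; exact hcbar.le
  have hAb' : ∀ t j l, |Atil' t j l| ≤ A := by
    intro t j l
    by_cases h : t < n
    · simp only [hAtil', dif_pos h, Matrix.of_apply]
      have h1 := haD ⟨t, h⟩ j l
      have h2 : Real.sqrt ((data ⟨t, h⟩).2.2 j l l) ≤ Real.sqrt κ :=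
        Real.sqrt_le_sqrt (le_trans (le_abs_self _) (hKb ⟨t, h⟩ j l l))
      have h3 : |z j / Real.sqrt n| ≤ Zmax := by
        rw [abs_div, abs_of_pos hsn0]
        exact le_trans (div_le_self (abs_nonneg _) hsn1) (hzZ j)
      calc |(data ⟨t, h⟩).2.1 j l
            + z j / Real.sqrt n * Real.sqrt ((data ⟨t, h⟩).2.2 j l l)|
          ≤ |(data ⟨t, h⟩).2.1 j l|
            + |z j / Real.sqrt n * Real.sqrt ((data ⟨t, h⟩).2.2 j l l)| := abs_add_le _ _
        _ ≤ amax + Zmax * Real.sqrt κ := by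
            apply add_le_add
            · rw [abs_of_nonneg h1.1]; exact h1.2
            · rw [abs_mul, abs_of_nonneg (Real.sqrt_nonneg _)]
              exact mul_le_mul h3 h2 (Real.sqrt_nonneg _) (by linarith)
    · simp only [hAtil', dif_neg h, Matrix.zero_apply, abs_zero]; exact hA0
  have hdl' : ∀ j, dlow ≤ d j := fun j => (hb j).1
  have hdh' : ∀ j, d j ≤ dhigh := fun j => (hb j).2
  have hpsq := opd_sum_sq_le n hn c' Atil' d cbar A dlow dhigh hcbar hA0 hdlow hdhigh
    hcb' hAb' hdl' hdh'
  set B : ℝ := ((2 * cbar + m * (A + dhigh) ^ 2) / (2 * dlow)) ^ 2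
      + 2 * cbar + m * (A + dhigh) ^ 2 with hBdef
  have hB0 : 0 ≤ B := by positivity
  have hpB : ∀ j, opdP n c' Atil' d n j ≤ Real.sqrt B := by
    intro j
    have h1 : (opdP n c' Atil' d n j) ^ 2 ≤ B :=
      le_trans (Finset.single_le_sum (fun j _ => sq_nonneg (opdP n c' Atil' d n j))
        (Finset.mem_univ j)) (hpsq n)
    calc opdP n c' Atil' d n j = Real.sqrt ((opdP n c' Atil' d n j) ^ 2) :=
          (Real.sqrt_sq (opdP_nonneg n c' Atil' d n j)).symm
      _ ≤ Real.sqrt B := Real.sqrt_le_sqrt h1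
  -- per-coordinate bound on the violation
  have hGj : ∀ j, ∑ t, (data t).2.1 j ⬝ᵥ opdOutput n z b data t
      + z j * Real.sqrt (∑ t, opdOutput n z b data t ⬝ᵥ
          (Matrix.of ((data t).2.2 j)).mulVec (opdOutput n z b data t))
      - b j ≤ (Real.sqrt B + Zmax * Real.sqrt κ / 2) * Real.sqrt n := by
    intro j
    have hstruct : ∀ t : Fin n, ∃ st : ℝ, 0 ≤ st ∧ st ≤ Real.sqrt κ ∧
        (opdXseq n c' Atil' d ↑t ⬝ᵥ (Matrix.of ((data t).2.2 j)).mulVec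
          (opdXseq n c' Atil' d ↑t) = st ^ 2) ∧
        ((Atil' ↑t).mulVec (opdXseq n c' Atil' d ↑t) j
          = (data t).2.1 j ⬝ᵥ opdXseq n c' Atil' d ↑t + (z j / Real.sqrt n) * st) := by
      intro t
      have hAt : Atil' (↑t : ℕ) = Matrix.of (fun j l => (data t).2.1 j l +
          (z j / Real.sqrt n) * Real.sqrt ((data t).2.2 j l l)) := by
        simp only [hAtil', dif_pos t.isLt, Fin.eta]
      have hXc : opdXseq n c' Atil' d ↑t
          = opdChoice (fun l => c' ↑t l
              - ∑ j', opdP n c' Atil' d ↑t j' * Atil' ↑t j' l) := rfl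
      rcases opdChoice_spec (fun l => c' ↑t l
          - ∑ j', opdP n c' Atil' d ↑t j' * Atil' ↑t j' l) with h0 | ⟨l, hl, _⟩
      · refine ⟨0, le_refl 0, Real.sqrt_nonneg κ, ?_, ?_⟩
        · rw [hXc, h0]; simp
        · rw [hXc, h0]; simp
      · refine ⟨Real.sqrt ((data t).2.2 j l l), Real.sqrt_nonneg _, ?_, ?_, ?_⟩
        · exact Real.sqrt_le_sqrt (le_trans (le_abs_self _) (hKb t j l l))
        · rw [hXc, hl]
          have hdiag := posSemidef_diag_nonneg (hKpsd t j) l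
          simp only [Matrix.mulVec, dotProduct, Matrix.of_apply, mul_ite, ite_mul,
            one_mul, zero_mul, mul_one, mul_zero, Finset.sum_ite_eq', Finset.mem_univ,
            if_true]
          rw [Real.sq_sqrt hdiag]
        · rw [hXc, hl, hAt]
          simp only [Matrix.mulVec, dotProduct, Matrix.of_apply, mul_ite, ite_mul,
            one_mul, zero_mul, mul_one, mul_zero, Finset.sum_ite_eq', Finset.mem_univ,
            if_true]
    choose s_ hs0 hsκ hq hmvs using hstruct
    set S : ℝ := ∑ t : Fin n, s_ t with hSdef
    set Q : ℝ := ∑ t : Fin n, s_ t ^ 2 with hQdef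
    have hS0 : 0 ≤ S := Finset.sum_nonneg fun t _ => hs0 t
    have hQ0 : 0 ≤ Q := Finset.sum_nonneg fun t _ => sq_nonneg _
    have hQS : Q ≤ Real.sqrt κ * S := by
      rw [hSdef, Finset.mul_sum]
      exact Finset.sum_le_sum fun t _ => by
        rw [sq]; exact mul_le_mul_of_nonneg_right (hsκ t) (hs0 t)
    have hSQ : S ^ 2 ≤ n * Q := by
      have h1 := sq_sum_le_card_mul_sum_sq (s := Finset.univ) (f := s_)
      simpa [Finset.card_univ] using h1
    have hlow : S / Real.sqrt n ≤ Real.sqrt Q := by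
      rw [div_le_iff₀ hsn0]
      have h1 : S ≤ Real.sqrt ((n : ℝ) * Q) := by
        rw [Real.le_sqrt hS0 (by positivity)]; exact hSQ
      rw [Real.sqrt_mul (le_of_lt hnR)] at h1
      linarith [h1]
    have hup2 : Real.sqrt Q ≤ (Real.sqrt κ * Real.sqrt n + S / Real.sqrt n) / 2 := by
      have h1 : Real.sqrt Q ≤ Real.sqrt (Real.sqrt κ * S) := Real.sqrt_le_sqrt hQS
      have h2 : Real.sqrt κ * S = (Real.sqrt κ * Real.sqrt n) * (S / Real.sqrt n) := by
        field_simp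
      rw [h2] at h1
      exact le_trans h1 (sqrt_mul_le_half_add (by positivity) (by positivity))
    have hfac0 : 0 ≤ Real.sqrt Q - S / Real.sqrt n := by linarith
    have hfac1 : Real.sqrt Q - S / Real.sqrt n ≤ Real.sqrt κ * Real.sqrt n / 2 := by
      have hSn : 0 ≤ S / Real.sqrt n := by positivity
      linarith
    have hzf : z j * (Real.sqrt Q - S / Real.sqrt n)
        ≤ Zmax * (Real.sqrt κ * Real.sqrt n / 2) :=
      mul_le_mul (le_trans (le_abs_self _) (hzZ j)) hfac1 hfac0 (by linarith)
    have e1 : ∑ t, (data t).2.1 j ⬝ᵥ opdOutput n z b data t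
        = (∑ t : Fin n, (Atil' ↑t).mulVec (opdXseq n c' Atil' d ↑t) j)
          - (z j / Real.sqrt n) * S := by
      rw [hSdef, Finset.mul_sum, ← Finset.sum_sub_distrib]
      refine Finset.sum_congr rfl fun t _ => ?_
      rw [hout t, hmvs t]; ring
    have e2 : ∑ t, opdOutput n z b data t ⬝ᵥ
        (Matrix.of ((data t).2.2 j)).mulVec (opdOutput n z b data t) = Q := by
      rw [hQdef]
      refine Finset.sum_congr rfl fun t _ => ?_
      rw [hout t, hq t]
    have e3 : ∑ t : Fin n, (Atil' ↑t).mulVec (opdXseq n c' Atil' d ↑t) j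
        ≤ b j + Real.sqrt n * Real.sqrt B := by
      have h1 := opd_telescope n c' Atil' d hsn0 n j
      have h2 : ∑ t ∈ Finset.range n, ((Atil' t).mulVec (opdXseq n c' Atil' d t) j - d j)
          = (∑ t : Fin n, (Atil' ↑t).mulVec (opdXseq n c' Atil' d ↑t) j) - n * d j := by
        rw [← Fin.sum_univ_eq_sum_range
          (fun t => (Atil' t).mulVec (opdXseq n c' Atil' d t) j - d j) n]
        rw [Finset.sum_sub_distrib, Finset.sum_const, Finset.card_univ, Fintype.card_fin,
          nsmul_eq_mul]
      have h3 : (n : ℝ) * d j = b j := by rw [hddef]; field_simp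
      have h4 := mul_le_mul_of_nonneg_left (hpB j) (Real.sqrt_nonneg (n : ℝ))
      rw [h2, h3] at h1
      linarith
    calc ∑ t, (data t).2.1 j ⬝ᵥ opdOutput n z b data t
        + z j * Real.sqrt (∑ t, opdOutput n z b data t ⬝ᵥ
            (Matrix.of ((data t).2.2 j)).mulVec (opdOutput n z b data t)) - b j
        = (∑ t : Fin n, (Atil' ↑t).mulVec (opdXseq n c' Atil' d ↑t) j) - b j
          + z j * (Real.sqrt Q - S / Real.sqrt n) := by
          rw [e1, e2]; field_simp; ring
      _ ≤ (b j + Real.sqrt n * Real.sqrt B) - b j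
          + Zmax * (Real.sqrt κ * Real.sqrt n / 2) := by linarith
      _ = (Real.sqrt B + Zmax * Real.sqrt κ / 2) * Real.sqrt n := by ring
  -- assemble the Euclidean norm bound
  set C1 : ℝ := Real.sqrt B + Zmax * Real.sqrt κ / 2 with hC1def
  have hC10 : 0 ≤ C1 := by positivity
  have hsum : ∑ j, (max (∑ t, (data t).2.1 j ⬝ᵥ opdOutput n z b data t
      + z j * Real.sqrt (∑ t, opdOutput n z b data t ⬝ᵥ
          (Matrix.of ((data t).2.2 j)).mulVec (opdOutput n z b data t))
      - b j) 0) ^ 2 ≤ (m : ℝ) * (C1 * Real.sqrt n) ^ 2 := by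
    calc ∑ j, (max (∑ t, (data t).2.1 j ⬝ᵥ opdOutput n z b data t
        + z j * Real.sqrt (∑ t, opdOutput n z b data t ⬝ᵥ
            (Matrix.of ((data t).2.2 j)).mulVec (opdOutput n z b data t))
        - b j) 0) ^ 2
        ≤ ∑ _j : Fin m, (C1 * Real.sqrt n) ^ 2 := by
          refine Finset.sum_le_sum fun j _ => ?_
          have h1 : max (∑ t, (data t).2.1 j ⬝ᵥ opdOutput n z b data t
              + z j * Real.sqrt (∑ t, opdOutput n z b data t ⬝ᵥ
                  (Matrix.of ((data t).2.2 j)).mulVec (opdOutput n z b data t))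
              - b j) 0 ≤ C1 * Real.sqrt n :=
            max_le (hGj j) (by positivity)
          exact pow_le_pow_left₀ (le_max_right _ 0) h1 2
      _ = (m : ℝ) * (C1 * Real.sqrt n) ^ 2 := by
          rw [Finset.sum_const, Finset.card_univ, Fintype.card_fin, nsmul_eq_mul]
  calc Real.sqrt (∑ j, (max (∑ t, (data t).2.1 j ⬝ᵥ opdOutput n z b data t
      + z j * Real.sqrt (∑ t, opdOutput n z b data t ⬝ᵥ
          (Matrix.of ((data t).2.2 j)).mulVec (opdOutput n z b data t))
      - b j) 0) ^ 2)
      ≤ Real.sqrt ((m : ℝ) * (C1 * Real.sqrt n) ^ 2) := Real.sqrt_le_sqrt hsum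
    _ = Real.sqrt m * (C1 * Real.sqrt n) := by
        rw [Real.sqrt_mul (Nat.cast_nonneg m), Real.sqrt_sq (by positivity)]
    _ = (Real.sqrt m * C1) * Real.sqrt n := by ring

lemma opd_integral_le_const {Ω : Type} [MeasurableSpace Ω] (P : Measure Ω)
    [IsProbabilityMeasure P] (f : Ω → ℝ) (c : ℝ) (hc : 0 ≤ c) (h : ∀ ω, f ω ≤ c) :
    ∫ ω, f ω ∂P ≤ c := by
  by_cases hInt : Integrable f P
  · calc ∫ ω, f ω ∂P ≤ ∫ _ω, c ∂P := integral_mono hInt (integrable_const c) h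
      _ = c := by simp [integral_const]
  · rw [integral_undef hInt]; exact hc

lemma opd_z_upper (m : ℕ) (η : Fin m → ℝ) (hη : ∀ j, η j ∈ Set.Ico (1/2 : ℝ) 1) :
    ∀ j : Fin m, ∃ Z : ℝ, ∀ w : ℝ,
      gaussianReal 0 1 (Set.Iic w) = ENNReal.ofReal (η j) → w ≤ Z := by
  intro j
  have h1 : ENNReal.ofReal (η j) < gaussianReal 0 1 Set.univ := by
    rw [measure_univ]
    exact ENNReal.ofReal_lt_one.mpr (hη j).2
  have h2 := tendsto_measure_Iic_atTop (gaussianReal 0 1)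
  have h3 : ∀ᶠ x : ℝ in Filter.atTop,
      ENNReal.ofReal (η j) < gaussianReal 0 1 (Set.Iic x) :=
    h2.eventually (eventually_gt_nhds h1)
  obtain ⟨Z, hZ⟩ := h3.exists
  refine ⟨Z, fun w hw => ?_⟩
  by_contra hcon
  push_neg at hcon
  have h4 : gaussianReal 0 1 (Set.Iic Z) ≤ gaussianReal 0 1 (Set.Iic w) :=
    measure_mono (Set.Iic_subset_Iic.mpr hcon.le)
  rw [hw] at h4
  exact absurd (lt_of_lt_of_le hZ h4) (lt_irrefl _)

lemma opd_z_lower (m : ℕ) (η : Fin m → ℝ) (hη : ∀ j, η j ∈ Set.Ico (1/2 : ℝ) 1) :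
    ∀ j : Fin m, ∃ Z : ℝ, ∀ w : ℝ,
      gaussianReal 0 1 (Set.Iic w) = ENNReal.ofReal (η j) → Z ≤ w := by
  intro j
  have h2 : Filter.Tendsto (fun x : ℝ => gaussianReal 0 1 (Set.Iic x)) Filter.atBot
      (nhds (gaussianReal 0 1 (⋂ x : ℝ, Set.Iic x))) :=
    tendsto_measure_iInter_atBot (fun x => measurableSet_Iic.nullMeasurableSet)
      (fun a b hab => Set.Iic_subset_Iic.mpr hab) ⟨0, measure_ne_top _ _⟩
  have hempty : (⋂ x : ℝ, Set.Iic x) = ∅ := by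
    ext y
    simp only [Set.mem_iInter, Set.mem_Iic, Set.mem_empty_iff_false, iff_false, not_forall,
      not_le]
    exact ⟨y - 1, by linarith⟩
  rw [hempty, measure_empty] at h2
  have hpos : (0 : ENNReal) < ENNReal.ofReal (η j) := by
    apply ENNReal.ofReal_pos.mpr
    linarith [(hη j).1]
  have h3 : ∀ᶠ x : ℝ in Filter.atBot,
      gaussianReal 0 1 (Set.Iic x) < ENNReal.ofReal (η j) :=
    h2.eventually (eventually_lt_nhds hpos)
  obtain ⟨Z, hZ⟩ := h3.exists
  refine ⟨Z, fun w hw => ?_⟩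
  by_contra hcon
  push_neg at hcon
  have h4 : gaussianReal 0 1 (Set.Iic w) ≤ gaussianReal 0 1 (Set.Iic Z) :=
    measure_mono (Set.Iic_subset_Iic.mpr hcon.le)
  rw [hw] at h4
  exact absurd (lt_of_le_of_lt h4 hZ) (lt_irrefl _)


/-- **Theorem 1 (constraint-violation bound).** For fixed dimensions `k, m`, bounds
`c̄, ā_max, κ`, confidence levels `η_j ∈ [1/2, 1)`, and capacity bounds `0 < d̲ ≤ d̄`,
there is a constant `C > 0` such that for every horizon `n`, every capacity vector `b`
with `d̲ ≤ b_j/n ≤ d̄`, and every i.i.d. bounded data sequence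
`(c_t, (ā_{tj})_j, (K_{tj})_j)` with `K_{tj}` symmetric positive semidefinite, the output
`x` of the online primal-dual algorithm satisfies `E[‖(g(x) − b)⁺‖₂] ≤ C √n`, where
`g_j(x) = ∑_t ā_{tj}ᵀ x_t + Φ⁻¹(η_j) √(∑_t x_tᵀ K_{tj} x_t)` are the second-order cone
constraint functions, `(·)⁺` is the componentwise positive part, and `‖·‖₂` the
Euclidean norm on `ℝ^m`.  Here `z_j = Φ⁻¹(η_j)`. -/
theorem opd_constraint_violation_bound
    (k m : ℕ) (hk : 0 < k) (hm : 0 < m)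
    (cbar amax κ : ℝ) (hcbar : 0 < cbar) (hamax : 0 < amax) (hκ : 0 < κ)
    (η : Fin m → ℝ) (hη : ∀ j, η j ∈ Set.Ico (1/2 : ℝ) 1)
    (dlow dhigh : ℝ) (hdlow : 0 < dlow) (hd : dlow ≤ dhigh) :
    ∃ C : ℝ, 0 < C ∧
      ∀ (n : ℕ), 0 < n →
      ∀ (Ω : Type) (_ : MeasurableSpace Ω) (P : Measure Ω), IsProbabilityMeasure P →
      ∀ (ξ : Fin n → Ω → RAPData k m),
        (∀ t, Measurable (ξ t)) →
        iIndepFun ξ P →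
        (∀ s t, IdentDistrib (ξ s) (ξ t) P P) →
        (∀ ω t l, (ξ t ω).1 l ∈ Set.Icc 0 cbar) →
        (∀ ω t j l, (ξ t ω).2.1 j l ∈ Set.Icc 0 amax) →
        (∀ ω t j, (Matrix.of ((ξ t ω).2.2 j)).PosSemidef) →
        (∀ ω t j l l', |(ξ t ω).2.2 j l l'| ≤ κ) →
      ∀ (b : Fin m → ℝ), (∀ j, dlow ≤ b j / n ∧ b j / n ≤ dhigh) →
      ∀ (z : Fin m → ℝ), (∀ j, (gaussianReal 0 1) (Set.Iic (z j)) = ENNReal.ofReal (η j)) →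
        ∫ ω, Real.sqrt (∑ j,
            (max (∑ t, (ξ t ω).2.1 j ⬝ᵥ opdOutput n z b (fun t' => ξ t' ω) t
              + z j * Real.sqrt (∑ t, opdOutput n z b (fun t' => ξ t' ω) t ⬝ᵥ
                  (Matrix.of ((ξ t ω).2.2 j)).mulVec (opdOutput n z b (fun t' => ξ t' ω) t))
              - b j) 0) ^ 2) ∂P
          ≤ C * Real.sqrt n := by
  classical
  choose Zu hZu using opd_z_upper m η hη
  choose Zl hZl using opd_z_lower m η hη
  set Zmax : ℝ := (∑ j, (|Zu j| + |Zl j|)) + 1 with hZmaxdef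
  have hZmax1 : 1 ≤ Zmax := by
    have h0 : 0 ≤ ∑ j, (|Zu j| + |Zl j|) :=
      Finset.sum_nonneg fun j _ => by positivity
    rw [hZmaxdef]; linarith
  have hZmax0 : 0 ≤ Zmax := le_trans zero_le_one hZmax1
  set C1 : ℝ := Real.sqrt (((2 * cbar + m * ((amax + Zmax * Real.sqrt κ) + dhigh) ^ 2)
      / (2 * dlow)) ^ 2 + 2 * cbar + m * ((amax + Zmax * Real.sqrt κ) + dhigh) ^ 2)
      + Zmax * Real.sqrt κ / 2 with hC1def
  have hC10 : 0 ≤ C1 := by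
    rw [hC1def]
    have h1 := Real.sqrt_nonneg (((2 * cbar + m * ((amax + Zmax * Real.sqrt κ) + dhigh) ^ 2)
      / (2 * dlow)) ^ 2 + 2 * cbar + m * ((amax + Zmax * Real.sqrt κ) + dhigh) ^ 2)
    have h2 : 0 ≤ Zmax * Real.sqrt κ / 2 :=
      div_nonneg (mul_nonneg hZmax0 (Real.sqrt_nonneg κ)) (by norm_num)
    linarith
  have hC0 : 0 < Real.sqrt m * C1 + 1 := by
    have := mul_nonneg (Real.sqrt_nonneg (m : ℝ)) hC10
    linarith
  refine ⟨Real.sqrt m * C1 + 1, hC0, ?_⟩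
  intro n hn Ω mΩ P hP ξ hmeas hindep hid hc ha hKpsd hKb b hb z hz
  haveI := hP
  have hzZ : ∀ j, |z j| ≤ Zmax := by
    intro j
    have h1 := hZu j (z j) (hz j)
    have h2 := hZl j (z j) (hz j)
    have h3 : |Zu j| + |Zl j| ≤ ∑ j', (|Zu j'| + |Zl j'|) :=
      Finset.single_le_sum (f := fun j' => |Zu j'| + |Zl j'|)
        (fun j' _ => by positivity) (Finset.mem_univ j)
    rw [abs_le]
    constructor
    · have h4 : -(|Zu j| + |Zl j|) ≤ Zl j := by
        have := abs_nonneg (Zu j); linarith [neg_abs_le (Zl j)]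
      rw [hZmaxdef]; linarith
    · have h5 : Zu j ≤ |Zu j| + |Zl j| := by
        have := abs_nonneg (Zl j); linarith [le_abs_self (Zu j)]
      rw [hZmaxdef]; linarith
  have hmid : (0 : ℝ) ≤ (Real.sqrt m * C1) * Real.sqrt n :=
    mul_nonneg (mul_nonneg (Real.sqrt_nonneg _) hC10) (Real.sqrt_nonneg _)
  refine le_trans (opd_integral_le_const P _ ((Real.sqrt m * C1) * Real.sqrt n) hmid
    (fun ω => opd_pointwise_bound n hn cbar amax κ dlow dhigh Zmax hcbar hamax hκ hdlow
      (le_trans hdlow.le hd) hZmax1 z b hzZ hb (fun t' => ξ t' ω)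
      (fun t l => hc ω t l) (fun t j l => ha ω t j l) (fun t j => hKpsd ω t j)
      (fun t j l l' => hKb ω t j l l'))) ?_
  have hsn : (0 : ℝ) ≤ Real.sqrt n := Real.sqrt_nonneg n
  nlinarith [mul_nonneg (Real.sqrt_nonneg (m : ℝ)) hC10]
end
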